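/- Let η = (K1, K2, K3, K4, κ3, κ6, κ9, κ12) be a tuple of positive real parameters with a(η) > 0 and b(η) < 0. If −b(η) ≤ 4·(K1·K2·K3·K4·κ3·κ6·κ9·κ12)^{1/4}·(2·a(η))^{1/2} + 3·(K1·K2·K3·K4·κ3·κ6^2·κ9^2·κ12)^{1/3}·(K2^{−1}·(K2·K4)^{1/3} + K3^{−1}·(K1·K3)^{1/3}), then p_{η,H}(x1,x3) ≥ 0 for all x1 > 0, x3 > 0. -/
import Mathlib
set_option maxHeartbeats 1000000

lemma sq_helper {u v c : ℝ} (hu : 0 ≤ u) (hv : 0 ≤ v) (hc : 0 ≤ c)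
    (h : c ^ 2 = u * v) : 2 * c ≤ u + v := by
  nlinarith [sq_nonneg (u - v), hu, hv, hc]

lemma cube_helper {u v c : ℝ} (hu : 0 ≤ u) (hv : 0 ≤ v) (hc : 0 ≤ c)
    (h : c ^ 3 = u ^ 2 * v) : 3 * c ≤ 2 * u + v := by
  have h8 : 0 ≤ (u - v) ^ 2 * (8 * u + v) := mul_nonneg (sq_nonneg _) (by linarith)
  have h2uv : 0 ≤ 2 * u + v := by linarith
  have hcube : (3 * c) ^ 3 ≤ (2 * u + v) ^ 3 := by nlinarith [h8, h]
  have := le_of_pow_le_pow_left₀ (by norm_num : (3:ℕ) ≠ 0) h2uv hcube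
  linarith

lemma pow3_rpow (x : ℝ) (hx : 0 ≤ x) : (x ^ ((1:ℝ)/3)) ^ 3 = x := by
  rw [← Real.rpow_natCast (x ^ ((1:ℝ)/3)) 3, ← Real.rpow_mul hx]; norm_num

lemma pow4_rpow (x : ℝ) (hx : 0 ≤ x) : (x ^ ((1:ℝ)/4)) ^ 4 = x := by
  rw [← Real.rpow_natCast (x ^ ((1:ℝ)/4)) 4, ← Real.rpow_mul hx]; norm_num

/-- The bivariate polynomial `p_{η,H}` supported on the hexagonal face `H`. -/
def pEtaH (K1 K2 K3 K4 κ3 κ6 κ9 κ12 x1 x3 : ℝ) : ℝ :=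
  K2 * κ3 * (κ3 * κ12 - κ6 * κ9) *
      (K2 * K4 * κ3 * κ9 * x1 ^ 4 * x3 ^ 2 + K1 * K3 * κ6 * κ12 * x1 ^ 2 * x3 ^ 2
        + K2 * K3 * κ3 * κ12 * x1 ^ 3 * x3 ^ 2)
    + K1 * K2 * K3 * κ3 * κ6 * κ12 * ((K2 + K3) * κ3 * κ12 - (K1 + K4) * κ6 * κ9)
        * x1 ^ 2 * x3
    + K1 * κ6 *
        (K2 ^ 2 * K4 * κ3 ^ 2 * κ9 ^ 2 * x1 ^ 4 * x3
          + 2 * K2 * K3 * K4 * κ3 ^ 2 * κ9 * κ12 * x1 ^ 3 * x3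
          + K1 * K2 * K3 * K4 * κ3 * κ6 * κ9 * κ12 * x1 ^ 2
          + 2 * K1 * K2 * K3 * κ3 * κ6 * κ12 ^ 2 * x1 * x3
          + K1 * K2 * K3 ^ 2 * κ3 * κ6 * κ12 ^ 2 * x1
          + K1 * K3 ^ 2 * κ6 ^ 2 * κ12 ^ 2 * x3
          + K1 ^ 2 * K3 ^ 2 * κ6 ^ 2 * κ12 ^ 2)

/-- Sufficient condition for nonnegativity of `p_{η,H}` on the positive
orthant coming from the pure cover. -/
theorem pEtaH_nonneg_of_cover4
    (K1 K2 K3 K4 κ3 κ6 κ9 κ12 : ℝ)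
    (hK1 : 0 < K1) (hK2 : 0 < K2) (hK3 : 0 < K3) (hK4 : 0 < K4)
    (hκ3 : 0 < κ3) (hκ6 : 0 < κ6) (hκ9 : 0 < κ9) (hκ12 : 0 < κ12)
    (ha : 0 < κ3 * κ12 - κ6 * κ9)
    (hb : (K2 + K3) * κ3 * κ12 - (K1 + K4) * κ6 * κ9 < 0)
    (hcond : -((K2 + K3) * κ3 * κ12 - (K1 + K4) * κ6 * κ9) ≤
      4 * (K1 * K2 * K3 * K4 * κ3 * κ6 * κ9 * κ12) ^ ((1 : ℝ) / 4)
          * (2 * (κ3 * κ12 - κ6 * κ9)) ^ ((1 : ℝ) / 2)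
        + 3 * (K1 * K2 * K3 * K4 * κ3 * κ6 ^ 2 * κ9 ^ 2 * κ12) ^ ((1 : ℝ) / 3)
            * (K2⁻¹ * (K2 * K4) ^ ((1 : ℝ) / 3) + K3⁻¹ * (K1 * K3) ^ ((1 : ℝ) / 3))) :
    ∀ x1 x3 : ℝ, 0 < x1 → 0 < x3 → 0 ≤ pEtaH K1 K2 K3 K4 κ3 κ6 κ9 κ12 x1 x3 := by
  intro x1 x3 hx1 hx3
  -- abbreviations for the irrational atoms
  set r4 := (K1 * K2 * K3 * K4 * κ3 * κ6 * κ9 * κ12) ^ ((1 : ℝ) / 4) with hr4def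
  set r2 := (2 * (κ3 * κ12 - κ6 * κ9)) ^ ((1 : ℝ) / 2) with hr2def
  set r3 := (K1 * K2 * K3 * K4 * κ3 * κ6 ^ 2 * κ9 ^ 2 * κ12) ^ ((1 : ℝ) / 3) with hr3def
  set eB := (K2 * K4) ^ ((1 : ℝ) / 3) with heBdef
  set eC := (K1 * K3) ^ ((1 : ℝ) / 3) with heCdef
  set sa := Real.sqrt (κ3 * κ12 - κ6 * κ9) with hsadef
  set st := Real.sqrt (K2 * K3 * κ3 * κ12) with hstdef
  set s2 := Real.sqrt 2 with hs2def
  have hr4n : 0 ≤ r4 := by rw [hr4def]; positivity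
  have hr3n : 0 ≤ r3 := by rw [hr3def]; positivity
  have heBn : 0 ≤ eB := by rw [heBdef]; positivity
  have heCn : 0 ≤ eC := by rw [heCdef]; positivity
  have hsan : 0 ≤ sa := Real.sqrt_nonneg _
  have hstn : 0 ≤ st := Real.sqrt_nonneg _
  have hs2n : 0 ≤ s2 := Real.sqrt_nonneg _
  have hr44 : r4 ^ 4 = K1 * K2 * K3 * K4 * κ3 * κ6 * κ9 * κ12 :=
    pow4_rpow _ (by positivity)
  have hr33 : r3 ^ 3 = K1 * K2 * K3 * K4 * κ3 * κ6 ^ 2 * κ9 ^ 2 * κ12 :=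
    pow3_rpow _ (by positivity)
  have heB3 : eB ^ 3 = K2 * K4 := pow3_rpow _ (by positivity)
  have heC3 : eC ^ 3 = K1 * K3 := pow3_rpow _ (by positivity)
  have hsa2 : sa ^ 2 = κ3 * κ12 - κ6 * κ9 := Real.sq_sqrt ha.le
  have hst2 : st ^ 2 = K2 * K3 * κ3 * κ12 := Real.sq_sqrt (by positivity)
  have hs22 : s2 ^ 2 = 2 := Real.sq_sqrt (by norm_num)
  have hr2eq : r2 = s2 * sa := by
    rw [hr2def, ← Real.sqrt_eq_rpow, Real.sqrt_mul (by norm_num : (0:ℝ) ≤ 2)]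
  -- Group A : (T1+T2+T3+T6+T8+T10) = W * Q ≥ M * (4*r4*r2) * x1^2*x3
  have hW : 2 * (K1 * κ6 * (sa * st) * (x1 * x3)) ≤
      (κ3 * κ12 - κ6 * κ9) * K2 * κ3 * x1 ^ 2 * x3 ^ 2 + K1 ^ 2 * K3 * κ6 ^ 2 * κ12 := by
    apply sq_helper (mul_nonneg (mul_nonneg (mul_nonneg (mul_nonneg ha.le hK2.le) hκ3.le)
      (sq_nonneg x1)) (sq_nonneg x3)) (by positivity) (by positivity)
    have h0 : (K1 * κ6 * (sa * st) * (x1 * x3)) ^ 2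
        = sa ^ 2 * (st ^ 2 * (K1 ^ 2 * κ6 ^ 2 * (x1 * x3) ^ 2)) := by ring
    rw [hsa2, hst2] at h0
    linear_combination h0
  have hQ0 : 2 * (r4 ^ 2 * x1) ≤ K2 * K4 * κ3 * κ9 * x1 ^ 2 + K1 * K3 * κ6 * κ12 := by
    apply sq_helper (by positivity) (by positivity) (by positivity)
    have h0 : (r4 ^ 2 * x1) ^ 2 = r4 ^ 4 * x1 ^ 2 := by ring
    rw [hr44] at h0
    linear_combination h0
  have hU0 : 2 * (s2 * (r4 * st)) ≤ K2 * K3 * κ3 * κ12 + 2 * r4 ^ 2 := by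
    apply sq_helper (by positivity) (by positivity) (by positivity)
    have h0 : (s2 * (r4 * st)) ^ 2 = st ^ 2 * (s2 ^ 2 * r4 ^ 2) := by ring
    rw [hst2, hs22] at h0
    linear_combination h0
  have hQ' : (K2 * K3 * κ3 * κ12 + 2 * r4 ^ 2) * x1 ≤
      K2 * K4 * κ3 * κ9 * x1 ^ 2 + K2 * K3 * κ3 * κ12 * x1 + K1 * K3 * κ6 * κ12 := by
    nlinarith [hQ0]
  have hU' : (2 * (s2 * (r4 * st))) * x1 ≤ (K2 * K3 * κ3 * κ12 + 2 * r4 ^ 2) * x1 :=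
    mul_le_mul_of_nonneg_right hU0 hx1.le
  have hWn : 0 ≤ (κ3 * κ12 - κ6 * κ9) * K2 * κ3 * x1 ^ 2 * x3 ^ 2
      + K1 ^ 2 * K3 * κ6 ^ 2 * κ12 := le_trans (by positivity) hW
  have hstep : (2 * (K1 * κ6 * (sa * st) * (x1 * x3))) * ((2 * (s2 * (r4 * st))) * x1) ≤
      ((κ3 * κ12 - κ6 * κ9) * K2 * κ3 * x1 ^ 2 * x3 ^ 2 + K1 ^ 2 * K3 * κ6 ^ 2 * κ12) *
      (K2 * K4 * κ3 * κ9 * x1 ^ 2 + K2 * K3 * κ3 * κ12 * x1 + K1 * K3 * κ6 * κ12) :=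
    mul_le_mul hW (le_trans hU' hQ') (by positivity) hWn
  have hA : (K1 * K2 * K3 * κ3 * κ6 * κ12) * (4 * r4 * r2) * (x1 ^ 2 * x3) ≤
      ((κ3 * κ12 - κ6 * κ9) * K2 * κ3 * x1 ^ 2 * x3 ^ 2 + K1 ^ 2 * K3 * κ6 ^ 2 * κ12) *
      (K2 * K4 * κ3 * κ9 * x1 ^ 2 + K2 * K3 * κ3 * κ12 * x1 + K1 * K3 * κ6 * κ12) := by
    have heq : (K1 * K2 * K3 * κ3 * κ6 * κ12) * (4 * r4 * r2) * (x1 ^ 2 * x3)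
        = (2 * (K1 * κ6 * (sa * st) * (x1 * x3))) * ((2 * (s2 * (r4 * st))) * x1) := by
      rw [hr2eq]
      linear_combination (-4 * K1 * κ6 * sa * s2 * r4 * x1 ^ 2 * x3) * hst2
    rw [heq]; exact hstep
  -- Group B : T5 + T9 ≥ M * (3*r3*(K2⁻¹*eB)) * x1^2*x3
  have hB : (K1 * K2 * K3 * κ3 * κ6 * κ12) * (3 * r3 * (K2⁻¹ * eB)) * (x1 ^ 2 * x3) ≤
      2 * (K1 * K2 * K3 * K4 * κ3 ^ 2 * κ6 * κ9 * κ12 * x1 ^ 3 * x3)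
      + K1 ^ 2 * K3 ^ 2 * κ6 ^ 3 * κ12 ^ 2 * x3 := by
    have heq : (K1 * K2 * K3 * κ3 * κ6 * κ12) * (3 * r3 * (K2⁻¹ * eB)) * (x1 ^ 2 * x3)
        = 3 * (r3 * eB * (K1 * K3 * κ3 * κ6 * κ12) * (x1 ^ 2 * x3)) := by
      have hK2' : K2 * K2⁻¹ = 1 := mul_inv_cancel₀ hK2.ne'
      linear_combination (3 * r3 * eB * K1 * K3 * κ3 * κ6 * κ12 * (x1 ^ 2 * x3)) * hK2'
    rw [heq]
    apply cube_helper (by positivity) (by positivity) (by positivity)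
    have h0 : (r3 * eB * (K1 * K3 * κ3 * κ6 * κ12) * (x1 ^ 2 * x3)) ^ 3
        = r3 ^ 3 * (eB ^ 3 * ((K1 * K3 * κ3 * κ6 * κ12) ^ 3 * (x1 ^ 2 * x3) ^ 3)) := by
      ring
    rw [hr33, heB3] at h0
    linear_combination h0
  -- Group C : T7 + T4 ≥ M * (3*r3*(K3⁻¹*eC)) * x1^2*x3
  have hC : (K1 * K2 * K3 * κ3 * κ6 * κ12) * (3 * r3 * (K3⁻¹ * eC)) * (x1 ^ 2 * x3) ≤
      2 * (K1 ^ 2 * K2 * K3 * κ3 * κ6 ^ 2 * κ12 ^ 2 * x1 * x3)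
      + K1 * K2 ^ 2 * K4 * κ3 ^ 2 * κ6 * κ9 ^ 2 * x1 ^ 4 * x3 := by
    have heq : (K1 * K2 * K3 * κ3 * κ6 * κ12) * (3 * r3 * (K3⁻¹ * eC)) * (x1 ^ 2 * x3)
        = 3 * (r3 * eC * (K1 * K2 * κ3 * κ6 * κ12) * (x1 ^ 2 * x3)) := by
      have hK3' : K3 * K3⁻¹ = 1 := mul_inv_cancel₀ hK3.ne'
      linear_combination (3 * r3 * eC * K1 * K2 * κ3 * κ6 * κ12 * (x1 ^ 2 * x3)) * hK3'
    rw [heq]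
    apply cube_helper (by positivity) (by positivity) (by positivity)
    have h0 : (r3 * eC * (K1 * K2 * κ3 * κ6 * κ12) * (x1 ^ 2 * x3)) ^ 3
        = r3 ^ 3 * (eC ^ 3 * ((K1 * K2 * κ3 * κ6 * κ12) ^ 3 * (x1 ^ 2 * x3) ^ 3)) := by
      ring
    rw [hr33, heC3] at h0
    linear_combination h0
  -- assembly
  have hsum : 0 ≤ ((K2 + K3) * κ3 * κ12 - (K1 + K4) * κ6 * κ9)
      + (4 * r4 * r2 + 3 * r3 * (K2⁻¹ * eB + K3⁻¹ * eC)) := by linarith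
  have hMx : 0 ≤ K1 * K2 * K3 * κ3 * κ6 * κ12 * (x1 ^ 2 * x3) := by positivity
  have hprod := mul_nonneg hMx hsum
  have hid : pEtaH K1 K2 K3 K4 κ3 κ6 κ9 κ12 x1 x3
      = K1 * K2 * K3 * κ3 * κ6 * κ12 * ((K2 + K3) * κ3 * κ12 - (K1 + K4) * κ6 * κ9)
          * (x1 ^ 2 * x3)
      + ((κ3 * κ12 - κ6 * κ9) * K2 * κ3 * x1 ^ 2 * x3 ^ 2 + K1 ^ 2 * K3 * κ6 ^ 2 * κ12) *
          (K2 * K4 * κ3 * κ9 * x1 ^ 2 + K2 * K3 * κ3 * κ12 * x1 + K1 * K3 * κ6 * κ12)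
      + (2 * (K1 * K2 * K3 * K4 * κ3 ^ 2 * κ6 * κ9 * κ12 * x1 ^ 3 * x3)
          + K1 ^ 2 * K3 ^ 2 * κ6 ^ 3 * κ12 ^ 2 * x3)
      + (2 * (K1 ^ 2 * K2 * K3 * κ3 * κ6 ^ 2 * κ12 ^ 2 * x1 * x3)
          + K1 * K2 ^ 2 * K4 * κ3 ^ 2 * κ6 * κ9 ^ 2 * x1 ^ 4 * x3) := by
    simp only [pEtaH]; ring
  rw [hid]
  linarith [hA, hB, hC, hprod]
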